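/- For coprime positive integers p, q, the classical Dedekind sum exponential identity holds: \sum_{0 < p < q, \gcd(p,q)=1} \exp(2\pi i \cdot 12 s(p,q)) = \sum_{p \in (\mathbb{Z}/q\mathbb{Z})^*} \exp\left(2\pi i \frac{p + p^{-1}}{q}\right), i.e., the sum over residues coprime to q of e(12 s(p,q)) equals the Kloosterman sum K(1,1;q). -/
import Mathlib


open Complex

/-- The sawtooth function `((x))`. -/
noncomputable def sawtooth (x : ℝ) : ℝ :=
  if Int.fract x = 0 then 0 else Int.fract x - 1/2

/-- The classical Dedekind sum `s(p,q)`. -/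
noncomputable def dedekindSum (p q : ℕ) : ℝ :=
  ∑ k ∈ Finset.range q, sawtooth (k / q) * sawtooth (p * k / q)

lemma sum_zmod_eq {M : Type*} [AddCommMonoid M] (q : ℕ) [NeZero q] (f : ℕ → M) :
    ∑ k ∈ Finset.range q, f k = ∑ x : ZMod q, f x.val := by
  refine Finset.sum_nbij' (fun k => (k : ZMod q)) (fun x => x.val) ?_ ?_ ?_ ?_ ?_
  · intro a _; exact Finset.mem_univ _
  · intro x _; exact Finset.mem_range.mpr (ZMod.val_lt x)
  · intro a ha; exact ZMod.val_cast_of_lt (Finset.mem_range.mp ha)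
  · intro x _; exact ZMod.natCast_rightInverse x
  · intro a ha; rw [ZMod.val_cast_of_lt (Finset.mem_range.mp ha)]

lemma sum_mod_perm {M : Type*} [AddCommMonoid M] (q : ℕ) [NeZero q] (p : ℕ)
    (hp : Nat.Coprime p q) (f : ℕ → M) :
    ∑ k ∈ Finset.range q, f ((p * k) % q) = ∑ k ∈ Finset.range q, f k := by
  rw [sum_zmod_eq, sum_zmod_eq]
  have key : ∀ x : ZMod q, ((p : ZMod q) * x).val = (p * x.val) % q := by
    intro x
    rw [ZMod.val_mul, ZMod.val_natCast, Nat.mod_mul_mod]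
  calc ∑ x : ZMod q, f ((p * x.val) % q)
      = ∑ x : ZMod q, f (((p : ZMod q) * x).val) := by simp_rw [key]
    _ = ∑ x : ZMod q, f x.val :=
        Fintype.sum_bijective _ ((ZMod.unitOfCoprime p hp).mulLeft_bijective) _ _
          (fun x => by rw [ZMod.coe_unitOfCoprime])

lemma six_sum_sq (n : ℕ) : 6 * ∑ k ∈ Finset.range n, (k:ℤ)^2 = n*(n-1)*(2*n-1) := by
  induction n with
  | zero => simp
  | succ n ih =>
    rw [Finset.sum_range_succ, mul_add, ih]
    push_cast
    ring

lemma twelve_S (q p p' : ℕ) [NeZero q] (hp : Nat.Coprime p q) (hpp' : (p * p') % q = 1 % q) :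
    ∃ n : ℤ, 12 * (∑ k ∈ Finset.range q, (k:ℤ) * ((p*k) % q : ℕ)) = q * (p + p') + q^2 * n := by
  set S : ℤ := ∑ k ∈ Finset.range q, (k:ℤ) * ((p*k) % q : ℕ) with hS
  have hdvd : ∀ k : ℕ, ((q:ℤ))^2 ∣
      (((p:ℤ)*k)^2 + (((p*k) % q : ℕ):ℤ)^2) - 2*(p:ℤ)*((k:ℤ)*((p*k) % q : ℕ)) := by
    intro k
    have h := Nat.mod_add_div (p*k) q
    have e : ((p:ℤ))*k - (((p*k) % q : ℕ):ℤ) = q * ((p*k/q : ℕ):ℤ) := by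
      push_cast
      nlinarith [h]
    refine ⟨((p*k/q : ℕ):ℤ)^2, ?_⟩
    have expand : (((p:ℤ)*k)^2 + (((p*k) % q : ℕ):ℤ)^2) - 2*(p:ℤ)*((k:ℤ)*((p*k) % q : ℕ))
        = ((p:ℤ)*k - (((p*k) % q : ℕ):ℤ))^2 := by ring
    rw [expand, e]; ring
  have hperm := sum_mod_perm q p hp (fun k => (k:ℤ)^2)
  have h2 : (q:ℤ)^2 ∣ ((p:ℤ)^2+1) * (∑ k ∈ Finset.range q, (k:ℤ)^2) - 2*p*S := by
    have A : ∑ k ∈ Finset.range q, ((p:ℤ)*k)^2 = (p:ℤ)^2 * ∑ k ∈ Finset.range q, (k:ℤ)^2 := by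
      rw [Finset.mul_sum]; exact Finset.sum_congr rfl fun k _ => by ring
    have expand : ((p:ℤ)^2+1) * (∑ k ∈ Finset.range q, (k:ℤ)^2) - 2*(p:ℤ)*S
        = ∑ k ∈ Finset.range q,
            ((((p:ℤ)*k)^2 + (((p*k) % q : ℕ):ℤ)^2) - 2*(p:ℤ)*((k:ℤ)*((p*k) % q : ℕ))) := by
      rw [Finset.sum_sub_distrib, Finset.sum_add_distrib, A, hperm, hS, ← Finset.mul_sum]
      ring
    rw [expand]
    exact Finset.dvd_sum fun k _ => hdvd k
  have h3 : (q:ℤ)^2 ∣ ((p:ℤ)^2+1) * ((q:ℤ)*((q:ℤ)-1)*(2*(q:ℤ)-1)) - 12*p*S := by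
    obtain ⟨d, hd⟩ := h2
    refine ⟨6*d, ?_⟩
    have e6 := six_sum_sq q
    nlinarith [hd, e6]
  obtain ⟨c, hc⟩ : ∃ c : ℤ, (p:ℤ)*p' - 1 = q*c := by
    have hm : p * p' ≡ 1 [MOD q] := hpp'
    obtain ⟨c, hc⟩ := (Nat.modEq_iff_dvd (n := q)).mp hm
    refine ⟨-c, ?_⟩
    push_cast at hc ⊢
    linarith
  have h4 : (q:ℤ)^2 ∣ (p:ℤ)*((q:ℤ)*((p:ℤ)+(p':ℤ)))
      - ((p:ℤ)^2+1) * ((q:ℤ)*((q:ℤ)-1)*(2*(q:ℤ)-1)) := by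
    refine ⟨c - ((p:ℤ)^2+1)*(2*(q:ℤ)-3), ?_⟩
    linear_combination (q:ℤ) * hc
  have h6 : (q:ℤ)^2 ∣ (p:ℤ) * ((q:ℤ)*((p:ℤ)+(p':ℤ)) - 12*S) := by
    have := dvd_add h4 h3
    have e : (p:ℤ)*((q:ℤ)*((p:ℤ)+(p':ℤ))) - ((p:ℤ)^2+1) * ((q:ℤ)*((q:ℤ)-1)*(2*(q:ℤ)-1))
        + (((p:ℤ)^2+1) * ((q:ℤ)*((q:ℤ)-1)*(2*(q:ℤ)-1)) - 12*p*S)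
        = (p:ℤ) * ((q:ℤ)*((p:ℤ)+(p':ℤ)) - 12*S) := by ring
    rwa [e] at this
  have hco : IsCoprime ((q:ℤ)^2) ((p:ℤ)) := by
    have : Nat.Coprime (q^2) p := (hp.symm.pow_left 2)
    have := Nat.isCoprime_iff_coprime.mpr this
    push_cast at this
    exact this
  obtain ⟨n, hn⟩ := hco.dvd_of_dvd_mul_left h6
  exact ⟨-n, by linarith⟩

section
variable (q p : ℕ) [NeZero q]

lemma term_eq (hp : Nat.Coprime p q) (k : ℕ) (hk : k ∈ Finset.Ico 1 q) :
    sawtooth (k / q) * sawtooth (p * k / q)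
      = ((k:ℝ)/q - 1/2) * ((((p*k) % q : ℕ):ℝ)/q - 1/2) := by
  obtain ⟨hk1, hk2⟩ := Finset.mem_Ico.mp hk
  have hq0 : (0:ℝ) < q := by
    have := Nat.pos_of_ne_zero (NeZero.ne q); exact_mod_cast this
  have hf1 : Int.fract ((k:ℝ) / q) = (k:ℝ)/q := by
    refine Int.fract_eq_self.mpr ⟨by positivity, ?_⟩
    rw [div_lt_one hq0]
    exact_mod_cast hk2
  have hm : (p * k) % q ≠ 0 := by
    intro h
    have hdvd : q ∣ p * k := Nat.dvd_of_mod_eq_zero h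
    have : q ∣ k := (Nat.Coprime.dvd_of_dvd_mul_left hp.symm) hdvd
    have := Nat.le_of_dvd (by omega) this
    omega
  have hf2 : Int.fract ((p:ℝ) * k / q) = (((p*k) % q : ℕ):ℝ)/q := by
    have : ((p:ℝ) * k) = ((p*k : ℕ):ℝ) := by push_cast; ring
    rw [this, Int.fract_div_natCast_eq_div_natCast_mod]
  rw [sawtooth, sawtooth, hf1, hf2]
  have hk0 : (0:ℝ) < k := by exact_mod_cast hk1
  have h1 : (k:ℝ)/q ≠ 0 := ne_of_gt (div_pos hk0 hq0)
  have h2 : (((p*k) % q : ℕ):ℝ)/q ≠ 0 := by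
    have : (0:ℝ) < (((p*k) % q : ℕ):ℝ) := by exact_mod_cast Nat.pos_of_ne_zero hm
    positivity
  rw [if_neg h1, if_neg h2]

lemma ded_formula (hp : Nat.Coprime p q) :
    (q:ℝ)^2 * (12 * dedekindSum p q)
      = 12 * ((∑ k ∈ Finset.range q, (k:ℤ) * ((p*k) % q : ℕ) : ℤ) : ℝ)
        - 3 * (q:ℝ)^2 * ((q:ℝ) - 1) := by
  have hq : 0 < q := Nat.pos_of_ne_zero (NeZero.ne q)
  have hq0 : (q:ℝ) ≠ 0 := by positivity
  -- sums over range q in ℝ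
  set m : ℕ → ℕ := fun k => (p*k) % q with hm
  have hSk : (∑ k ∈ Finset.range q, (k:ℝ)) * 2 = q * (q - 1) := by
    have := Finset.sum_range_id_mul_two q
    have : ((∑ i ∈ Finset.range q, i) * 2 : ℕ) = q * (q-1) := this
    calc (∑ k ∈ Finset.range q, (k:ℝ)) * 2 = (((∑ i ∈ Finset.range q, i) * 2 : ℕ) : ℝ) := by
          push_cast; ring
      _ = ((q * (q-1) : ℕ) : ℝ) := by rw [this]
      _ = q * ((q:ℝ) - 1) := by push_cast [Nat.cast_sub hq]; ring
  have hSm : (∑ k ∈ Finset.range q, (m k : ℝ)) = ∑ k ∈ Finset.range q, (k:ℝ) := by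
    exact sum_mod_perm q p hp (fun k => (k:ℝ))
  have hcard : ((Finset.Ico 1 q).card : ℝ) = (q:ℝ) - 1 := by
    rw [Nat.card_Ico]
    push_cast [Nat.cast_sub hq]
    ring
  -- split off k = 0
  have hded : dedekindSum p q
      = ∑ k ∈ Finset.Ico 1 q, ((k:ℝ)/q - 1/2) * ((m k : ℝ)/q - 1/2) := by
    rw [dedekindSum, Finset.sum_range_eq_add_Ico _ hq]
    have h0 : sawtooth ((0:ℕ) / q) * sawtooth (p * (0:ℕ) / q) = 0 := by
      simp [sawtooth]
    rw [h0, zero_add]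
    exact Finset.sum_congr rfl (term_eq q p hp)
  have expand : (q:ℝ)^2 * (12 * dedekindSum p q)
      = ∑ k ∈ Finset.Ico 1 q,
          (12*(k:ℝ)*(m k) - 6*q*(k:ℝ) - 6*q*(m k) + 3*(q:ℝ)^2) := by
    rw [hded, Finset.mul_sum, Finset.mul_sum]
    refine Finset.sum_congr rfl fun k _ => ?_
    field_simp
    ring
  rw [expand]
  -- split sum
  have sk0 : ∑ k ∈ Finset.range q, (k:ℝ) = ∑ k ∈ Finset.Ico 1 q, (k:ℝ) := by
    rw [Finset.sum_range_eq_add_Ico _ hq]; simp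
  have sm0 : ∑ k ∈ Finset.range q, (m k : ℝ) = ∑ k ∈ Finset.Ico 1 q, (m k : ℝ) := by
    rw [Finset.sum_range_eq_add_Ico _ hq]; simp [hm]
  have skm0 : ((∑ k ∈ Finset.range q, (k:ℤ) * ((p*k) % q : ℕ) : ℤ) : ℝ)
      = ∑ k ∈ Finset.Ico 1 q, (k:ℝ) * (m k : ℝ) := by
    have e : ((∑ k ∈ Finset.range q, (k:ℤ) * ((p*k) % q : ℕ) : ℤ) : ℝ)
        = ∑ k ∈ Finset.range q, (k:ℝ) * (m k : ℝ) := by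
      push_cast [hm]
      norm_cast
    rw [e, Finset.sum_range_eq_add_Ico _ hq]
    simp [hm]
  have expand2 : ∀ k : ℕ, (12*(k:ℝ)*(m k) - 6*q*(k:ℝ) - 6*q*(m k) + 3*(q:ℝ)^2)
      = 12*((k:ℝ)*(m k)) - 6*q*(k:ℝ) - 6*q*(m k) + 3*(q:ℝ)^2 := fun k => by ring
  simp_rw [expand2]
  rw [Finset.sum_add_distrib, Finset.sum_sub_distrib, Finset.sum_sub_distrib,
    ← Finset.mul_sum, ← Finset.mul_sum, ← Finset.mul_sum,
    Finset.sum_const, nsmul_eq_mul, hcard, skm0, ← sk0, ← sm0, hSm]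
  linear_combination -6*(q:ℝ)*hSk
end

lemma main_aux (q p p' : ℕ) [NeZero q] (hp : Nat.Coprime p q) (hpp' : (p * p') % q = 1 % q) :
    ∃ n : ℤ, (12 * dedekindSum p q : ℝ) = ((p:ℝ) + (p':ℝ))/q + (n:ℝ) := by
  obtain ⟨n0, hn0⟩ := twelve_S q p p' hp hpp'
  have hq : 0 < q := Nat.pos_of_ne_zero (NeZero.ne q)
  have hq0 : (q:ℝ) ≠ 0 := ne_of_gt (by exact_mod_cast hq)
  have hf := ded_formula q p hp
  have hn0R : 12 * ((∑ k ∈ Finset.range q, (k:ℤ) * ((p*k) % q : ℕ) : ℤ):ℝ)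
      = (q:ℝ)*((p:ℝ)+(p':ℝ)) + (q:ℝ)^2 * (n0:ℝ) := by
    exact_mod_cast congrArg (Int.cast : ℤ → ℝ) hn0
  refine ⟨n0 - 3*((q:ℤ) - 1), ?_⟩
  have goal2 : (q:ℝ)^2 * (12 * dedekindSum p q)
      = (q:ℝ)^2 * (((p:ℝ)+(p':ℝ))/q + ((n0 - 3*((q:ℤ)-1) : ℤ):ℝ)) := by
    rw [hf, hn0R]
    push_cast
    field_simp
    ring
  exact mul_left_cancel₀ (pow_ne_zero 2 hq0) goal2

open Complex in
lemma exp_eq_of_sub_int (x y : ℝ) (n : ℤ) (h : x = y + n) :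
    Complex.exp (2*Real.pi*I*(x:ℂ)) = Complex.exp (2*Real.pi*I*(y:ℂ)) := by
  have : (x:ℂ) = (y:ℂ) + (n:ℂ) := by exact_mod_cast congrArg (Complex.ofReal) h
  rw [this, mul_add, Complex.exp_add]
  have e : (2*(Real.pi:ℂ)*I*(n:ℂ)) = (n:ℂ)*(2*Real.pi*I) := by ring
  rw [e, Complex.exp_int_mul_two_pi_mul_I, mul_one]

/-- The sum of `e(12 s(p,q))` over residues `p` coprime to `q` equals the Kloosterman sum
`K(1,1;q) = ∑_{p ∈ (ℤ/qℤ)^*} e((p + p⁻¹)/q)`. -/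
theorem dedekind_kloosterman (q : ℕ) [NeZero q] :
    ∑ p ∈ (Finset.range q).filter (fun p => Nat.Coprime p q),
        Complex.exp (2 * Real.pi * I * (12 * dedekindSum p q : ℝ)) =
      ∑ u : (ZMod q)ˣ,
        Complex.exp (2 * Real.pi * I *
          ((((u : ZMod q).val : ℝ) + (((u⁻¹ : (ZMod q)ˣ) : ZMod q).val : ℝ)) / q)) := by
  
  refine Finset.sum_bij' (fun p hp => ZMod.unitOfCoprime p (Finset.mem_filter.mp hp).2)
    (fun u _ => (u : ZMod q).val) (fun a ha => Finset.mem_univ _)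
    (fun u _ => ?_) (fun a ha => ?_) (fun u _ => ?_) (fun a ha => ?_)
  · exact Finset.mem_filter.mpr ⟨Finset.mem_range.mpr (ZMod.val_lt _), ZMod.val_coe_unit_coprime u⟩
  · obtain ⟨ha1, ha2⟩ := Finset.mem_filter.mp ha
    simp only [ZMod.coe_unitOfCoprime]
    exact ZMod.val_cast_of_lt (Finset.mem_range.mp ha1)
  · apply Units.ext
    simp only [ZMod.coe_unitOfCoprime]
    exact ZMod.natCast_rightInverse _
  · obtain ⟨ha1, ha2⟩ := Finset.mem_filter.mp ha
    have halt : a < q := Finset.mem_range.mp ha1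
    set u := ZMod.unitOfCoprime a ha2 with hu
    set p' := ((u⁻¹ : (ZMod q)ˣ) : ZMod q).val with hp'
    have hval : (u : ZMod q).val = a := by
      rw [hu, ZMod.coe_unitOfCoprime]; exact ZMod.val_cast_of_lt halt
    have hpp' : (a * p') % q = 1 % q := by
      have h1 : ((a * p' : ℕ) : ZMod q) = ((1:ℕ) : ZMod q) := by
        push_cast
        have e1 : ((a : ℕ) : ZMod q) = (u : ZMod q) := by rw [hu, ZMod.coe_unitOfCoprime]
        have e2 : ((p' : ℕ) : ZMod q) = ((u⁻¹ : (ZMod q)ˣ) : ZMod q) :=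
          ZMod.natCast_rightInverse _
        rw [e1, e2, ← Units.val_mul, mul_inv_cancel, Units.val_one]
      exact (ZMod.natCast_eq_natCast_iff _ _ _).mp h1
    obtain ⟨n, hn⟩ := main_aux q a p' ha2 hpp'
    have := exp_eq_of_sub_int (12 * dedekindSum a q) (((a:ℝ) + (p':ℝ))/q) n hn
    rw [this, hval]
    norm_cast
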